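/- Let S = {p₁,…,p_m} be a finite set of probability distributions, each on n states with values sorted nonincreasingly, let G_S be the greedy coupling output sequence, and for an integer z ≥ 2 let M_S^{1/z} be the distribution obtained by multiplying ∧S with Geom_{1/z}. Then M_S^{1/z} ≼_{z−1} G_S, i.e., M_S^{1/z} is (z−1)-strongly majorized by G_S. -/

import Mathlib

open Finset Real

private lemma geomsum (γ : ℝ) (c : ℕ) :
    ∑ t ∈ Finset.range c, γ * (1 - γ) ^ t = 1 - (1 - γ) ^ c := by
  induction c with
  | zero => simp
  | succ c ih => rw [Finset.sum_range_succ, ih, pow_succ]; ring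

private lemma geo_bound (z : ℕ) (hz : 2 ≤ z) (a v : ℝ) (ha : 0 ≤ a) (hv : 0 < v)
    (F : Finset ℕ) (hF : ∀ t ∈ F, v ≤ a * ((1 / (z : ℝ)) * (1 - 1 / (z : ℝ)) ^ t)) :
    ∑ t ∈ F, a * ((1 / (z : ℝ)) * (1 - 1 / (z : ℝ)) ^ t) ≤ max (a - ((z : ℝ) - 1) * v) 0 := by
  have hzR : (2 : ℝ) ≤ (z : ℝ) := by exact_mod_cast hz
  have hzpos : (0 : ℝ) < z := by linarith
  set γ : ℝ := 1 / (z : ℝ) with hγ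
  have hγpos : 0 < γ := by positivity
  have hγle : γ ≤ 1 / 2 := by
    rw [hγ]
    apply one_div_le_one_div_of_le <;> linarith
  have h1γpos : 0 < 1 - γ := by linarith
  have h1γlt : 1 - γ < 1 := by linarith
  rcases F.eq_empty_or_nonempty with rfl | ⟨t0, ht0⟩
  · simpa using le_max_right (a - ((z : ℝ) - 1) * v) 0
  · have hv0 := hF t0 ht0
    have hw0 : 0 < γ * (1 - γ) ^ t0 := mul_pos hγpos (pow_pos h1γpos t0)
    have hapos : 0 < a := by nlinarith
    have hexc : ∃ c, a * (γ * (1 - γ) ^ c) < v := by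
      obtain ⟨c, hc⟩ := exists_pow_lt_of_lt_one (show 0 < v / (a * γ) by positivity) h1γlt
      refine ⟨c, ?_⟩
      rw [lt_div_iff₀ (by positivity)] at hc
      nlinarith
    have hcspec : a * (γ * (1 - γ) ^ (Nat.find hexc)) < v := Nat.find_spec hexc
    have hmono : ∀ s t : ℕ, s ≤ t → a * (γ * (1 - γ) ^ t) ≤ a * (γ * (1 - γ) ^ s) := by
      intro s t hst
      have h1 := pow_le_pow_of_le_one h1γpos.le (by linarith) hst
      have h2 : (0:ℝ) ≤ (1 - γ) ^ t := pow_nonneg h1γpos.le t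
      nlinarith [mul_le_mul_of_nonneg_left h1 (show (0:ℝ) ≤ a * γ by positivity)]
    have hFsub : F ⊆ Finset.range (Nat.find hexc) := by
      intro t ht
      rw [Finset.mem_range]
      by_contra hct; push_neg at hct
      have := hmono _ t hct
      linarith [hF t ht]
    have hc0 : Nat.find hexc ≠ 0 := by
      intro h
      have h2 := hmono 0 t0 (Nat.zero_le _)
      rw [h] at hcspec
      linarith [hF t0 ht0]
    obtain ⟨d, hdc⟩ := Nat.exists_eq_succ_of_ne_zero hc0
    have hd : v ≤ a * (γ * (1 - γ) ^ d) := by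
      have := Nat.find_min hexc (show d < Nat.find hexc by omega)
      linarith [not_lt.mp this]
    have hkey : ((z : ℝ) - 1) * v ≤ a * (1 - γ) ^ (Nat.find hexc) := by
      have h2 : (1 - γ) / γ = (z : ℝ) - 1 := by rw [hγ]; field_simp
      have h1 : v * ((1 - γ) / γ) ≤ a * (γ * (1 - γ) ^ d) * ((1 - γ) / γ) :=
        mul_le_mul_of_nonneg_right hd (by positivity)
      have h3 : a * (γ * (1 - γ) ^ d) * ((1 - γ) / γ) = a * (1 - γ) ^ (d + 1) := by
        field_simp
        ring
      calc ((z : ℝ) - 1) * v = v * ((1 - γ) / γ) := by rw [h2]; ring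
        _ ≤ a * (γ * (1 - γ) ^ d) * ((1 - γ) / γ) := h1
        _ = a * (1 - γ) ^ (d + 1) := h3
        _ = a * (1 - γ) ^ (Nat.find hexc) := by rw [hdc]
    have hsum : ∑ t ∈ F, a * (γ * (1 - γ) ^ t)
        ≤ ∑ t ∈ Finset.range (Nat.find hexc), a * (γ * (1 - γ) ^ t) :=
      Finset.sum_le_sum_of_subset_of_nonneg hFsub (fun t _ _ => by positivity)
    have hgeo : ∑ t ∈ Finset.range (Nat.find hexc), a * (γ * (1 - γ) ^ t)
        = a * (1 - (1 - γ) ^ (Nat.find hexc)) := by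
      rw [← Finset.mul_sum, geomsum]
    calc ∑ t ∈ F, a * (γ * (1 - γ) ^ t) ≤ a * (1 - (1 - γ) ^ (Nat.find hexc)) := by
          rw [← hgeo]; exact hsum
      _ ≤ a - ((z : ℝ) - 1) * v := by nlinarith
      _ ≤ max (a - ((z : ℝ) - 1) * v) 0 := le_max_left _ _

set_option maxHeartbeats 2000000 in
/-- **Lemma 2 (strong majorization by the greedy coupling).**
With `G` the greedy coupling output sequence for `S = {p₁,…,p_m}`, `M` the sorted value
sequence of `∧S`, and `Mz` the nonincreasing enumeration (via the bijection `e`) of the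
multiset `{M k · (1/z)(1−1/z)^t : k ∈ Fin n, t ∈ ℕ}` (i.e. `M_S^{1/z} = ∧S × Geom_{1/z}`):
for every integer `z ≥ 2`, `M_S^{1/z} ≼_{z−1} G_S`, i.e. for every index `i` there is `j`
with `∑_{k≤i} Mz k ≤ ∑_{k≤j} G k` and `(z−1)·Mz i ≤ G j`. -/
theorem geometric_split_strongly_majorized_by_greedy
    (m n : ℕ) [NeZero m] [NeZero n]
    (p : Fin m → ℕ → Fin n → ℝ)      -- residuals: `p ℓ t` before step `t`; `p ℓ 0 = p_ℓ`
    (G : ℕ → ℝ)                       -- greedy output sequence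
    (M : Fin n → ℝ)                   -- sorted values of ∧S
    (hsort : ∀ ℓ, Antitone (p ℓ 0))
    (hpos : ∀ ℓ k, 0 ≤ p ℓ 0 k)
    (hsum : ∀ ℓ, ∑ k, p ℓ 0 k = 1)
    (hG : ∀ t, G t = univ.inf' univ_nonempty fun ℓ => univ.sup' univ_nonempty (p ℓ t))
    (hstep : ∀ t ℓ, ∃ k, (∀ k', p ℓ t k' ≤ p ℓ t k) ∧
      p ℓ (t + 1) = Function.update (p ℓ t) k (p ℓ t k - G t))
    (hM : ∀ i, M i =
      (univ.inf' univ_nonempty fun ℓ => ∑ j ∈ Iic i, p ℓ 0 j) - ∑ j ∈ Iio i, M j)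
    (z : ℕ) (hz : 2 ≤ z)
    (Mz : ℕ → ℝ) (e : ℕ ≃ Fin n × ℕ)
    (hMz : ∀ i, Mz i = M (e i).1 * ((1 / (z : ℝ)) * (1 - 1 / (z : ℝ)) ^ (e i).2))
    (hMzsort : Antitone Mz) :
    ∀ i : ℕ, ∃ j : ℕ,
      (∑ k ∈ Finset.range (i + 1), Mz k ≤ ∑ k ∈ Finset.range (j + 1), G k) ∧
      ((z : ℝ) - 1) * Mz i ≤ G j := by
  have hzR : (2 : ℝ) ≤ (z : ℝ) := by exact_mod_cast hz
  have hzpos : (0 : ℝ) < z := by linarith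
  set γ : ℝ := 1 / (z : ℝ) with hγdef
  have hγpos : 0 < γ := by positivity
  have hγle : γ ≤ 1 / 2 := by
    rw [hγdef]; apply one_div_le_one_div_of_le <;> linarith
  have h1γpos : 0 < 1 - γ := by linarith
  have h1γlt : 1 - γ < 1 := by linarith
  have hn : 0 < n := Nat.pos_of_ne_zero (NeZero.ne n)
  have hnR : (0 : ℝ) < n := by exact_mod_cast hn
  have hbase0 : (0 : ℝ) ≤ 1 - 1 / (n : ℝ) := by
    have : 1 / (n : ℝ) ≤ 1 := by
      rw [div_le_one hnR]; exact_mod_cast hn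
    linarith
  have hbase1 : 1 - 1 / (n : ℝ) < 1 := by
    have : 0 < 1 / (n : ℝ) := by positivity
    linarith
  -- nonnegativity of residual entries
  have hnn : ∀ t ℓ k, 0 ≤ p ℓ t k := by
    intro t
    induction t with
    | zero => exact fun ℓ k => hpos ℓ k
    | succ t ih =>
      intro ℓ k
      obtain ⟨k0, hk0max, hupd⟩ := hstep t ℓ
      rw [hupd]
      rcases eq_or_ne k k0 with rfl | hne
      · rw [Function.update_self]
        have h1 : G t ≤ p ℓ t k := by
          rw [hG t]
          exact le_trans (Finset.inf'_le _ (Finset.mem_univ ℓ))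
            (Finset.sup'_le _ _ fun k' _ => hk0max k')
        linarith
      · rw [Function.update_of_ne hne]; exact ih ℓ k
  have hGnn : ∀ t, 0 ≤ G t := by
    intro t; rw [hG t]
    apply Finset.le_inf'
    intro ℓ _
    exact le_trans (hnn t ℓ ⟨0, hn⟩) (Finset.le_sup' _ (Finset.mem_univ _))
  have hdec : ∀ t ℓ k, p ℓ (t + 1) k ≤ p ℓ t k := by
    intro t ℓ k
    obtain ⟨k0, hk0max, hupd⟩ := hstep t ℓ
    rw [hupd]
    rcases eq_or_ne k k0 with rfl | hne
    · rw [Function.update_self]; linarith [hGnn t]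
    · rw [Function.update_of_ne hne]
  have hdec0 : ∀ t ℓ k, p ℓ t k ≤ p ℓ 0 k := by
    intro t
    induction t with
    | zero => exact fun ℓ k => le_refl _
    | succ t ih => exact fun ℓ k => le_trans (hdec t ℓ k) (ih ℓ k)
  -- sum of residuals
  have hsumt : ∀ t ℓ, ∑ k, p ℓ t k = 1 - ∑ s ∈ Finset.range t, G s := by
    intro t
    induction t with
    | zero => intro ℓ; simp [hsum ℓ]
    | succ t ih =>
      intro ℓ
      obtain ⟨k0, hk0max, hupd⟩ := hstep t ℓ
      rw [hupd, Finset.sum_update_of_mem (Finset.mem_univ k0), Finset.sum_range_succ]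
      have hsd : ∑ x ∈ univ \ {k0}, p ℓ t x = (∑ k, p ℓ t k) - p ℓ t k0 := by
        rw [Finset.sum_sdiff_eq_sub (Finset.singleton_subset_iff.mpr (Finset.mem_univ k0))]
        simp
      rw [hsd, ih ℓ]; ring
  -- mass at time t controlled geometrically
  have hGle : ∀ t ℓ, G t ≤ ∑ k, p ℓ t k := by
    intro t ℓ
    rw [hG t]
    refine le_trans (Finset.inf'_le _ (Finset.mem_univ ℓ)) ?_
    apply Finset.sup'_le
    intro k _
    exact Finset.single_le_sum (fun k' _ => hnn t ℓ k') (Finset.mem_univ k)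
  have hRb : ∀ t ℓ, ∑ k, p ℓ t k ≤ (1 - 1 / (n : ℝ)) ^ t := by
    intro t
    induction t with
    | zero => intro ℓ; simp [hsum ℓ]
    | succ t ih =>
      intro ℓ
      have h1 : ∑ k, p ℓ (t + 1) k = (∑ k, p ℓ t k) - G t := by
        rw [hsumt (t + 1) ℓ, hsumt t ℓ, Finset.sum_range_succ]; ring
      have h2 : (∑ k, p ℓ t k) / n ≤ G t := by
        rw [hG t]
        apply Finset.le_inf'
        intro ℓ' _
        have hs : ∑ k, p ℓ' t k ≤ (n : ℝ) * univ.sup' univ_nonempty (p ℓ' t) := by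
          have h3 := Finset.sum_le_card_nsmul univ (p ℓ' t)
            (univ.sup' univ_nonempty (p ℓ' t))
            (fun k _ => Finset.le_sup' (p ℓ' t) (Finset.mem_univ k))
          simpa [nsmul_eq_mul, Finset.card_univ] using h3
        have hseq : ∑ k, p ℓ' t k = ∑ k, p ℓ t k := by rw [hsumt t ℓ', hsumt t ℓ]
        rw [div_le_iff₀ hnR]
        rw [hseq] at hs
        linarith
      have h0 : 0 ≤ ∑ k, p ℓ t k := Finset.sum_nonneg (fun k _ => hnn t ℓ k)
      have h4 : ∑ k, p ℓ (t+1) k ≤ (∑ k, p ℓ t k) * (1 - 1 / (n : ℝ)) := by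
        rw [h1]
        have : (∑ k, p ℓ t k) * (1 / (n : ℝ)) = (∑ k, p ℓ t k) / n := by ring
        nlinarith
      calc ∑ k, p ℓ (t+1) k ≤ (∑ k, p ℓ t k) * (1 - 1 / (n : ℝ)) := h4
        _ ≤ (1 - 1 / (n : ℝ)) ^ t * (1 - 1 / (n : ℝ)) :=
            mul_le_mul_of_nonneg_right (ih ℓ) hbase0
        _ = (1 - 1 / (n : ℝ)) ^ (t + 1) := by rw [pow_succ]
  have hGsmall : ∀ t, G t ≤ (1 - 1 / (n : ℝ)) ^ t :=
    fun t => le_trans (hGle t ⟨0, Nat.pos_of_ne_zero (NeZero.ne m)⟩)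
      (hRb t ⟨0, Nat.pos_of_ne_zero (NeZero.ne m)⟩)
  have hSlb : ∀ t, 1 - (1 - 1 / (n : ℝ)) ^ t ≤ ∑ s ∈ Finset.range t, G s := by
    intro t
    have h1 := hRb t ⟨0, Nat.pos_of_ne_zero (NeZero.ne m)⟩
    have h2 := hsumt t ⟨0, Nat.pos_of_ne_zero (NeZero.ne m)⟩
    linarith
  have hGexists : ∀ θ : ℝ, 0 < θ → ∃ t, G t < θ := by
    intro θ hθ
    obtain ⟨t, ht⟩ := exists_pow_lt_of_lt_one hθ hbase1
    exact ⟨t, lt_of_le_of_lt (hGsmall t) ht⟩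
  -- ℕ-indexed prefix sums of the original distributions
  set q : Fin m → ℕ → ℝ := fun ℓ j => if h : j < n then p ℓ 0 ⟨j, h⟩ else 0 with hqdef
  have hqnn : ∀ ℓ j, 0 ≤ q ℓ j := by
    intro ℓ j
    rw [hqdef]
    dsimp only
    split
    · exact hpos ℓ _
    · exact le_refl 0
  set V : ℕ → ℝ := fun a => univ.inf' univ_nonempty (fun ℓ => ∑ j ∈ Finset.range a, q ℓ j)
    with hVdef
  have hQIic : ∀ (ℓ) (i : Fin n), ∑ j ∈ Finset.range (i.val + 1), q ℓ j
      = ∑ j ∈ Iic i, p ℓ 0 j := by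
    intro ℓ i
    refine Finset.sum_bij' (fun j hj => (⟨j, by
        have := i.isLt; have := Finset.mem_range.mp hj; omega⟩ : Fin n))
      (fun k _ => (k : ℕ)) ?_ ?_ ?_ ?_ ?_
    · intro a ha
      simp only [Finset.mem_Iic, Fin.le_def]
      have := Finset.mem_range.mp ha; omega
    · intro a ha
      simp only [Finset.mem_range]
      have := Finset.mem_Iic.mp ha
      have := Fin.le_def.mp this; omega
    · intro a ha; rfl
    · intro a ha; exact Fin.eta a a.isLt
    · intro a ha
      rw [hqdef]
      simp only
      rw [dif_pos]
  have hVIic : ∀ (a : ℕ) (h : a < n), V (a + 1)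
      = univ.inf' univ_nonempty (fun ℓ => ∑ j ∈ Iic (⟨a, h⟩ : Fin n), p ℓ 0 j) := by
    intro a h
    rw [hVdef]
    exact Finset.inf'_congr _ rfl (fun ℓ _ => hQIic ℓ ⟨a, h⟩)
  have hV0 : V 0 = 0 := by rw [hVdef]; simp
  have hMIio : ∀ (b : ℕ) (i : Fin n), i.val = b → ∑ j ∈ Iio i, M j = V b := by
    intro b
    induction b with
    | zero =>
      intro i hi
      have hIe : Iio i = (∅ : Finset (Fin n)) := by
        ext k; simp only [Finset.mem_Iio, Finset.notMem_empty, iff_false, not_lt]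
        rw [Fin.le_def]; omega
      rw [hIe, hV0]; simp
    | succ d ih =>
      intro i hi
      have hd : d < n := by have := i.isLt; omega
      have h1 : Iio i = insert (⟨d, hd⟩ : Fin n) (Iio (⟨d, hd⟩ : Fin n)) := by
        rw [Finset.Iio_insert]
        ext k
        simp only [Finset.mem_Iio, Finset.mem_Iic, Fin.lt_def, Fin.le_def, Fin.val_mk, hi]
        omega
      rw [h1, Finset.sum_insert (by simp)]
      have h2 := hVIic d hd
      rw [hM ⟨d, hd⟩, ih ⟨d, hd⟩ rfl, h2]
      ring
  have hMD : ∀ i : Fin n, M i = V (i.val + 1) - V i.val := by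
    intro i
    have h1 := hVIic i.val i.isLt
    simp only [Fin.eta] at h1
    rw [hM i, hMIio i.val i rfl, h1]
  have hSIic : ∀ a : Fin n, ∑ k ∈ Iic a, M k = V (a.val + 1) := by
    intro a
    rw [← Finset.Iio_insert, Finset.sum_insert (by simp), hMD a, hMIio a.val a rfl]
    ring
  have hVmono : Monotone V := by
    apply monotone_nat_of_le_succ
    intro a
    apply Finset.le_inf'
    intro ℓ _
    refine le_trans (Finset.inf'_le _ (Finset.mem_univ ℓ)) ?_
    exact Finset.sum_le_sum_of_subset_of_nonneg
      (Finset.range_subset_range.mpr (Nat.le_succ a)) (fun j _ _ => hqnn ℓ j)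
  have hqanti : ∀ ℓ a, q ℓ (a + 1) ≤ q ℓ a := by
    intro ℓ a
    rw [hqdef]
    dsimp only
    by_cases h1 : a + 1 < n
    · rw [dif_pos h1, dif_pos (by omega : a < n)]
      exact hsort ℓ (Fin.mk_le_mk.mpr (by omega))
    · rw [dif_neg h1]
      by_cases h2 : a < n
      · rw [dif_pos h2]; exact hpos ℓ _
      · rw [dif_neg h2]
  have hDanti : Antitone (fun a => V (a + 1) - V a) := by
    apply antitone_nat_of_succ_le
    intro a
    obtain ⟨ℓ, _, hℓ⟩ := Finset.exists_mem_eq_inf' univ_nonempty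
      (fun ℓ => ∑ j ∈ Finset.range (a + 1), q ℓ j)
    have hA : V (a + 2) ≤ ∑ j ∈ Finset.range (a + 2), q ℓ j :=
      Finset.inf'_le _ (Finset.mem_univ ℓ)
    have hB : V a ≤ ∑ j ∈ Finset.range a, q ℓ j := Finset.inf'_le _ (Finset.mem_univ ℓ)
    have hq1 : q ℓ (a + 1) ≤ q ℓ a := hqanti ℓ a
    have hs2 : ∑ j ∈ Finset.range (a + 2), q ℓ j
        = (∑ j ∈ Finset.range a, q ℓ j) + q ℓ a + q ℓ (a + 1) := by
      rw [Finset.sum_range_succ, Finset.sum_range_succ]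
    have hs1 : V (a + 1) = ∑ j ∈ Finset.range (a + 1), q ℓ j := hℓ
    have hs3 : ∑ j ∈ Finset.range (a + 1), q ℓ j
        = (∑ j ∈ Finset.range a, q ℓ j) + q ℓ a := Finset.sum_range_succ _ _
    show V (a + 1 + 1) - V (a + 1) ≤ V (a + 1) - V a
    have hs4 : a + 1 + 1 = a + 2 := rfl
    rw [hs4]
    linarith
  have hManti : Antitone M := by
    intro i j hij
    rw [hMD i, hMD j]
    exact hDanti (show i.val ≤ j.val from hij)
  have hMnn : ∀ i, 0 ≤ M i := by
    intro i
    rw [hMD i]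
    have := hVmono (Nat.le_succ i.val)
    linarith
  have hG0 : G 0 = univ.inf' univ_nonempty (fun ℓ => p ℓ 0 0) := by
    rw [hG 0]
    apply Finset.inf'_congr _ rfl
    intro ℓ _
    apply le_antisymm
    · exact Finset.sup'_le _ _ (fun k _ => hsort ℓ (Fin.zero_le k))
    · exact Finset.le_sup' _ (Finset.mem_univ 0)
  have hM0G0 : M 0 = G 0 := by
    have h0v : ((0 : Fin n) : ℕ) = 0 := Fin.val_zero n
    have h1 : M 0 = V 1 := by rw [hMD 0, h0v, hV0, sub_zero]
    rw [h1, hG0]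
    simp only [hVdef]
    apply Finset.inf'_congr _ rfl
    intro ℓ _
    rw [Finset.sum_range_one, hqdef]
    simp only
    rw [dif_pos hn]
    exact congrArg (p ℓ 0) (Fin.ext h0v.symm)
  have hMle1 : ∀ i, M i ≤ 1 := by
    intro i
    have h1 : M i ≤ M 0 := hManti (Fin.zero_le i)
    have h2 := hGsmall 0
    rw [pow_zero] at h2
    rw [hM0G0] at h1
    linarith
  have hVn : V n = 1 := by
    simp only [hVdef]
    have hcongr : ∀ ℓ ∈ (univ : Finset (Fin m)), ∑ j ∈ Finset.range n, q ℓ j = 1 := by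
      intro ℓ _
      rw [← Fin.sum_univ_eq_sum_range (q ℓ) n, ← hsum ℓ]
      apply Finset.sum_congr rfl
      intro k _
      rw [hqdef]
      simp only
      rw [dif_pos k.isLt, Fin.eta]
    rw [Finset.inf'_congr univ_nonempty rfl hcongr, Finset.inf'_const]
  have hMtot : ∑ k, M k = 1 := by
    have htop : (univ : Finset (Fin n)) = Iic (⟨n - 1, by omega⟩ : Fin n) := by
      ext k
      simp only [Finset.mem_univ, Finset.mem_Iic, true_iff, Fin.le_def, Fin.val_mk]
      have := k.isLt; omega
    rw [htop, hSIic]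
    have hnn1 : (⟨n - 1, by omega⟩ : Fin n).val + 1 = n := by
      show n - 1 + 1 = n
      omega
    rw [hnn1, hVn]
  -- the main claim: consumed mass dominates the excess of M over G t
  have hmain : ∀ t, ∑ k, max (M k - G t) 0 ≤ ∑ s ∈ Finset.range t, G s := by
    intro t
    obtain ⟨ℓ, _, hℓ⟩ := Finset.exists_mem_eq_inf' univ_nonempty
      (fun ℓ => univ.sup' univ_nonempty (p ℓ t))
    have hGt : G t = univ.sup' univ_nonempty (p ℓ t) := by rw [hG t, hℓ]
    have hentry : ∀ k, p ℓ t k ≤ G t := by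
      intro k; rw [hGt]; exact Finset.le_sup' _ (Finset.mem_univ k)
    have h1 : ∑ k, max (p ℓ 0 k - G t) 0 ≤ ∑ s ∈ Finset.range t, G s := by
      have hsum' : ∑ s ∈ Finset.range t, G s = ∑ k, (p ℓ 0 k - p ℓ t k) := by
        rw [Finset.sum_sub_distrib, hsum ℓ, hsumt t ℓ]; ring
      rw [hsum']
      apply Finset.sum_le_sum
      intro k _
      have h2 := hentry k
      have h3 := hdec0 t ℓ k
      apply max_le <;> linarith
    refine le_trans ?_ h1
    set g := G t with hg
    have hsplit : ∑ k, max (M k - g) 0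
        = ∑ k ∈ univ.filter (fun k => g < M k), (M k - g) := by
      rw [Finset.sum_filter]
      apply Finset.sum_congr rfl
      intro k _
      split_ifs with h
      · exact max_eq_left (by linarith)
      · exact max_eq_right (by push_neg at h; linarith)
    rw [hsplit]
    rcases Finset.eq_empty_or_nonempty (univ.filter (fun k => g < M k)) with hAe | hAne
    · rw [hAe]
      simp only [Finset.sum_empty]
      exact Finset.sum_nonneg (fun k _ => le_max_right _ _)
    · set a := (univ.filter (fun k => g < M k)).max' hAne with ha
      have haA := Finset.max'_mem _ hAne
      rw [← ha] at haA
      have hga : g < M a := (Finset.mem_filter.mp haA).2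
      have hAIic : univ.filter (fun k => g < M k) = Iic a := by
        ext k
        simp only [Finset.mem_filter, Finset.mem_univ, true_and, Finset.mem_Iic]
        constructor
        · intro hk
          exact Finset.le_max' _ k (Finset.mem_filter.mpr ⟨Finset.mem_univ k, hk⟩)
        · intro hk
          exact lt_of_lt_of_le hga (hManti hk)
      rw [hAIic]
      have hS : ∑ k ∈ Iic a, M k ≤ ∑ k ∈ Iic a, p ℓ 0 k := by
        have h1 := hVIic a.val a.isLt
        simp only [Fin.eta] at h1
        rw [hSIic a, h1]
        exact Finset.inf'_le _ (Finset.mem_univ ℓ)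
      have hstep2 : ∑ k ∈ Iic a, (M k - g) ≤ ∑ k ∈ Iic a, (p ℓ 0 k - g) := by
        rw [Finset.sum_sub_distrib, Finset.sum_sub_distrib]
        linarith
      refine le_trans hstep2 ?_
      refine le_trans (Finset.sum_le_sum (fun k _ => le_max_left (p ℓ 0 k - g) 0)) ?_
      exact Finset.sum_le_sum_of_subset_of_nonneg (Finset.subset_univ _)
        (fun k _ _ => le_max_right _ _)
  have hMznn : ∀ k, 0 ≤ Mz k := by
    intro k
    rw [hMz k]
    exact mul_nonneg (hMnn _) (mul_nonneg hγpos.le (pow_nonneg h1γpos.le _))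
  have hsumle : ∀ F : Finset ℕ, ∑ k ∈ F, Mz k ≤ 1 := by
    intro F
    set T := (F.image (fun k => (e k).2)).sup id + 1 with hT
    have hsub : F.image e ⊆ univ ×ˢ Finset.range T := by
      intro x hx
      obtain ⟨k, hk, rfl⟩ := Finset.mem_image.mp hx
      refine Finset.mem_product.mpr ⟨Finset.mem_univ _, Finset.mem_range.mpr ?_⟩
      have h1 : (e k).2 ≤ (F.image (fun k => (e k).2)).sup id :=
        Finset.le_sup (f := id) (Finset.mem_image_of_mem _ hk)
      omega
    have h1 : ∑ k ∈ F, Mz k = ∑ x ∈ F.image e, M x.1 * (γ * (1 - γ) ^ x.2) := by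
      rw [Finset.sum_image (fun x _ y _ h => e.injective h)]
      exact Finset.sum_congr rfl (fun k _ => hMz k)
    rw [h1]
    have h2 : ∑ x ∈ F.image e, M x.1 * (γ * (1 - γ) ^ x.2)
        ≤ ∑ x ∈ univ ×ˢ Finset.range T, M x.1 * (γ * (1 - γ) ^ x.2) :=
      Finset.sum_le_sum_of_subset_of_nonneg hsub
        (fun x _ _ => mul_nonneg (hMnn _) (mul_nonneg hγpos.le (pow_nonneg h1γpos.le _)))
    refine le_trans h2 ?_
    rw [Finset.sum_product]
    have h3 : ∀ k' : Fin n, ∑ t ∈ Finset.range T, M k' * (γ * (1 - γ) ^ t)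
        = M k' * (1 - (1 - γ) ^ T) := by
      intro k'
      rw [← Finset.mul_sum, geomsum]
    calc ∑ k' : Fin n, ∑ t ∈ Finset.range T, M k' * (γ * (1 - γ) ^ t)
        = ∑ k' : Fin n, M k' * (1 - (1 - γ) ^ T) :=
          Finset.sum_congr rfl (fun k' _ => h3 k')
      _ ≤ ∑ k' : Fin n, M k' := Finset.sum_le_sum (fun k' _ => by
          have h4 := pow_nonneg h1γpos.le T
          nlinarith [hMnn k'])
      _ = 1 := hMtot
  intro i
  rcases le_or_gt (Mz i) 0 with hv0 | hv
  · -- degenerate case: `Mz i ≤ 0`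
    have hex : ∃ k' : Fin n, 0 < M k' := by
      by_contra h
      push_neg at h
      have h1 : ∑ k, M k ≤ 0 := Finset.sum_nonpos (fun k _ => h k)
      rw [hMtot] at h1; linarith
    obtain ⟨k', hk'⟩ := hex
    have hex2 : ∃ t' : ℕ, i + 1 ≤ e.symm (k', t') := by
      by_contra h
      push_neg at h
      have hcard : (Finset.range (i + 2)).card ≤ (Finset.range (i + 1)).card := by
        apply Finset.card_le_card_of_injOn (fun t' => (e.symm (k', t') : ℕ))
        · intro t' _
          exact Finset.mem_range.mpr (h t')
        · intro x _ y _ hxy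
          have h2 := e.symm.injective hxy
          exact congrArg Prod.snd h2
      rw [Finset.card_range, Finset.card_range] at hcard
      omega
    obtain ⟨t', ht'⟩ := hex2
    have hMzi' : Mz (e.symm (k', t')) = M k' * (γ * (1 - γ) ^ t') := by
      rw [hMz (e.symm (k', t')), Equiv.apply_symm_apply]
    have hMzpos : 0 < Mz (e.symm (k', t')) := by
      rw [hMzi']
      exact mul_pos hk' (mul_pos hγpos (pow_pos h1γpos t'))
    have hnotmem : e.symm (k', t') ∉ Finset.range (i + 1) := by
      simp only [Finset.mem_range]; omega
    have hub : ∑ k ∈ Finset.range (i + 1), Mz k ≤ 1 - Mz (e.symm (k', t')) := by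
      have h4 := hsumle (insert (e.symm (k', t')) (Finset.range (i + 1)))
      rw [Finset.sum_insert hnotmem] at h4
      linarith
    obtain ⟨t, ht⟩ := exists_pow_lt_of_lt_one hMzpos hbase1
    refine ⟨t, ?_, ?_⟩
    · have h5 := hSlb (t + 1)
      have h6 : (1 - 1 / (n : ℝ)) ^ (t + 1) ≤ (1 - 1 / (n : ℝ)) ^ t :=
        pow_le_pow_of_le_one hbase0 (by linarith) (Nat.le_succ t)
      linarith
    · nlinarith [hGnn t, hv0, hzR]
  · -- main case: `Mz i > 0`
    have hvi : Mz i = M (e i).1 * (γ * (1 - γ) ^ (e i).2) := hMz i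
    have hw : 0 < γ * (1 - γ) ^ (e i).2 := mul_pos hγpos (pow_pos h1γpos _)
    have hMk0pos : 0 < M (e i).1 := by
      rcases (hMnn (e i).1).lt_or_eq with h | h
      · exact h
      · exfalso; rw [hvi, ← h] at hv; simp at hv
    set θ : ℝ := ((z : ℝ) - 1) * Mz i with hθdef
    have hθpos : 0 < θ := mul_pos (by linarith) hv
    have hzγ : ((z : ℝ) - 1) * γ = 1 - γ := by
      rw [hγdef]
      field_simp
    have hθeq : θ = M (e i).1 * (1 - γ) ^ ((e i).2 + 1) := by
      rw [hθdef, hvi, pow_succ]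
      linear_combination (M (e i).1 * (1 - γ) ^ (e i).2) * hzγ
    have hθleM : θ ≤ M (e i).1 := by
      rw [hθeq]
      have h1 : (1 - γ) ^ ((e i).2 + 1) ≤ 1 := pow_le_one₀ h1γpos.le (by linarith)
      nlinarith [hMnn (e i).1]
    have hθle : θ ≤ G 0 := by
      have h2 : M (e i).1 ≤ M 0 := hManti (Fin.zero_le _)
      rw [← hM0G0]
      linarith
    have hfind : ∃ t, G t < θ := hGexists θ hθpos
    have hc0 : Nat.find hfind ≠ 0 := by
      intro h
      have h3 := Nat.find_spec hfind
      rw [h] at h3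
      linarith
    obtain ⟨j, hj⟩ := Nat.exists_eq_succ_of_ne_zero hc0
    have hGj : θ ≤ G j := by
      have h4 := Nat.find_min hfind (show j < Nat.find hfind by omega)
      linarith [not_lt.mp h4]
    refine ⟨j, ?_, hGj⟩
    have hGc : G (Nat.find hfind) < θ := Nat.find_spec hfind
    have hchain2 : ∑ k : Fin n, max (M k - θ) 0 ≤ ∑ s ∈ Finset.range (j + 1), G s := by
      rw [show j + 1 = Nat.find hfind from hj.symm]
      refine le_trans (Finset.sum_le_sum fun k _ => ?_) (hmain (Nat.find hfind))
      exact max_le_max (by linarith : M k - θ ≤ M k - G (Nat.find hfind)) le_rfl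
    refine le_trans ?_ hchain2
    have hexT : ∃ T : ℕ, (1 - γ) ^ T < Mz i := exists_pow_lt_of_lt_one hv h1γlt
    set T := Nat.find hexT with hTdef
    have hTspec : (1 - γ) ^ T < Mz i := Nat.find_spec hexT
    have hmemT : ∀ k ∈ Finset.range (i + 1), (e k).2 < T := by
      intro k hk
      have hk' : Mz i ≤ Mz k := hMzsort (by
        have := Finset.mem_range.mp hk; omega)
      by_contra hTle
      push_neg at hTle
      have h1 : (1 - γ) ^ (e k).2 ≤ (1 - γ) ^ T :=
        pow_le_pow_of_le_one h1γpos.le (by linarith) hTle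
      have h2 : Mz k ≤ (1 - γ) ^ (e k).2 := by
        rw [hMz k]
        have h3 := hMle1 (e k).1
        have h4 := hMnn (e k).1
        have h5 : (0 : ℝ) ≤ (1 - γ) ^ (e k).2 := pow_nonneg h1γpos.le _
        have h6 : M (e k).1 * (γ * (1 - γ) ^ (e k).2) ≤ 1 * (γ * (1 - γ) ^ (e k).2) :=
          mul_le_mul_of_nonneg_right h3 (mul_nonneg hγpos.le h5)
        have h7 : γ * (1 - γ) ^ (e k).2 ≤ 1 * (1 - γ) ^ (e k).2 :=
          mul_le_mul_of_nonneg_right (by linarith) h5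
        linarith
      linarith
    have hsub2 : (Finset.range (i + 1)).image e
        ⊆ (univ ×ˢ Finset.range T).filter
          (fun x : Fin n × ℕ => Mz i ≤ M x.1 * (γ * (1 - γ) ^ x.2)) := by
      intro x hx
      obtain ⟨k, hk, rfl⟩ := Finset.mem_image.mp hx
      refine Finset.mem_filter.mpr ⟨Finset.mem_product.mpr
        ⟨Finset.mem_univ _, Finset.mem_range.mpr (hmemT k hk)⟩, ?_⟩
      rw [← hMz k]
      exact hMzsort (by have := Finset.mem_range.mp hk; omega)
    have h1 : ∑ k ∈ Finset.range (i + 1), Mz k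
        = ∑ x ∈ (Finset.range (i + 1)).image e, M x.1 * (γ * (1 - γ) ^ x.2) := by
      rw [Finset.sum_image (fun x _ y _ h => e.injective h)]
      exact Finset.sum_congr rfl (fun k _ => hMz k)
    rw [h1]
    have h2 : ∑ x ∈ (Finset.range (i + 1)).image e, M x.1 * (γ * (1 - γ) ^ x.2)
        ≤ ∑ x ∈ (univ ×ˢ Finset.range T).filter
            (fun x : Fin n × ℕ => Mz i ≤ M x.1 * (γ * (1 - γ) ^ x.2)),
          M x.1 * (γ * (1 - γ) ^ x.2) :=
      Finset.sum_le_sum_of_subset_of_nonneg hsub2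
        (fun x _ _ => mul_nonneg (hMnn _) (mul_nonneg hγpos.le (pow_nonneg h1γpos.le _)))
    refine le_trans h2 ?_
    rw [Finset.sum_filter, Finset.sum_product]
    apply Finset.sum_le_sum
    intro k' _
    rw [← Finset.sum_filter]
    exact geo_bound z hz (M k') (Mz i) (hMnn k') hv
      ((Finset.range T).filter (fun t => Mz i ≤ M k' * (γ * (1 - γ) ^ t)))
      (fun t ht => (Finset.mem_filter.mp ht).2)
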